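/- arXiv:2304.13544 — 3 statements merged into one kernel-verified Lean document; each statement's English description precedes it below -/
import Mathlib

section
/- Let (X,d) be a metric space and u, v : X → ℝ be locally Lipschitz functions such that u - v achieves a local maximum at a point x̂. If the lower slope of v at x̂ equals its slope (i.e., |∇v|(x̂) = |∇⁻v|(x̂)), then |∇u|(x̂) ≥ |∇v|(x̂). -/
open Filter Metric Topology

/-- The slope of `f` at `x`: `limsup_{y → x} |f y - f x| / dist y x`. -/
noncomputable def slopeAt {X : Type*} [MetricSpace X] (f : X → ℝ) (x : X) : ℝ :=
  Filter.limsup (fun y => |f y - f x| / dist y x) (𝓝[≠] x)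

/-- The lower slope of `f` at `x`: `limsup_{y → x} [f y - f x]₋ / dist y x`. -/
noncomputable def lowerSlopeAt {X : Type*} [MetricSpace X] (f : X → ℝ) (x : X) : ℝ :=
  Filter.limsup (fun y => max 0 (f x - f y) / dist y x) (𝓝[≠] x)

theorem stmt_2 {X : Type*} [MetricSpace X] (u v : X → ℝ)
    (hu : LocallyLipschitz u) (hv : LocallyLipschitz v)
    (xh : X) (hmax : IsLocalMax (fun x => u x - v x) xh)
    (h : slopeAt v xh = lowerSlopeAt v xh) :
    slopeAt v xh ≤ slopeAt u xh := by
  rw [h]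
  unfold lowerSlopeAt slopeAt
  by_cases hne : (𝓝[≠] xh).NeBot
  · haveI := hne
    have hev : ∀ᶠ y in 𝓝[≠] xh,
        max 0 (v xh - v y) / dist y xh ≤ |u y - u xh| / dist y xh := by
      filter_upwards [eventually_nhdsWithin_of_eventually_nhds hmax] with y hy
      have hy' : u y - v y ≤ u xh - v xh := hy
      have hnum : max 0 (v xh - v y) ≤ |u y - u xh| := by
        rcases le_or_gt (v xh - v y) 0 with h0 | h0
        · rw [max_eq_left h0]; exact abs_nonneg _
        · calc max 0 (v xh - v y) = v xh - v y := max_eq_right h0.le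
            _ ≤ u xh - u y := by linarith
            _ ≤ |u xh - u y| := le_abs_self _
            _ = |u y - u xh| := abs_sub_comm _ _
      gcongr
    have hbdd : IsBoundedUnder (· ≤ ·) (𝓝[≠] xh)
        (fun y => |u y - u xh| / dist y xh) := by
      obtain ⟨K, t, ht, hK⟩ := hu xh
      refine ⟨K, eventually_map.mpr ?_⟩
      have hmem : ∀ᶠ y in 𝓝[≠] xh, y ∈ t :=
        eventually_nhdsWithin_of_eventually_nhds (Filter.eventually_of_mem ht fun _ hy => hy)
      filter_upwards [hmem, self_mem_nhdsWithin] with y hyt hyx'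
      have hd : 0 < dist y xh := dist_pos.mpr hyx'
      have hle := hK.dist_le_mul y hyt xh (mem_of_mem_nhds ht)
      rw [Real.dist_eq] at hle
      calc |u y - u xh| / dist y xh ≤ (K * dist y xh) / dist y xh := by gcongr
        _ = K := by field_simp
    have hcob : IsCoboundedUnder (· ≤ ·) (𝓝[≠] xh)
        (fun y => max 0 (v xh - v y) / dist y xh) :=
      isCoboundedUnder_le_of_le _ fun y => div_nonneg (le_max_left _ _) dist_nonneg
    exact limsup_le_limsup hev hcob hbdd
  · rw [not_neBot] at hne
    simp [hne, limsup, limsSup]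
end

section
/- Let (X,d) be a metric space and u, v : X → ℝ be locally Lipschitz functions such that u - v achieves a local maximum at x̂. If the upper slope of u at x̂ equals its slope (i.e., |∇u|(x̂) = |∇⁺u|(x̂)), then |∇u|(x̂) ≤ |∇v|(x̂). -/
open Filter Metric Topology

/-- The upper slope of `f` at `x`: `limsup_{y → x} [f y - f x]₊ / dist y x`. -/
noncomputable def upperSlopeAt {X : Type*} [MetricSpace X] (f : X → ℝ) (x : X) : ℝ :=
  Filter.limsup (fun y => max 0 (f y - f x) / dist y x) (𝓝[≠] x)

theorem stmt_3 {X : Type*} [MetricSpace X] (u v : X → ℝ)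
    (hu : LocallyLipschitz u) (hv : LocallyLipschitz v)
    (xh : X) (hmax : IsLocalMax (fun x => u x - v x) xh)
    (h : slopeAt u xh = upperSlopeAt u xh) :
    slopeAt u xh ≤ slopeAt v xh := by
  rw [h]
  rcases eq_or_neBot (𝓝[≠] xh) with hbot | hne
  · unfold upperSlopeAt slopeAt
    rw [hbot]
    simp [Filter.limsup, Filter.limsSup, Filter.eventually_bot]
  · have hev : ∀ᶠ y in 𝓝[≠] xh,
        max 0 (u y - u xh) / dist y xh ≤ |v y - v xh| / dist y xh := by
      filter_upwards [nhdsWithin_le_nhds hmax] with y hy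
      have h1 : max 0 (u y - u xh) ≤ |v y - v xh| := by
        apply max_le (abs_nonneg _)
        have : u y - u xh ≤ v y - v xh := by
          have h2 : u y - v y ≤ u xh - v xh := hy
          linarith
        exact this.trans (le_abs_self _)
      gcongr
    -- boundedness of RHS
    obtain ⟨K, t, ht, hK⟩ := hv xh
    have hbdd : IsBoundedUnder (· ≤ ·) (𝓝[≠] xh)
        (fun y => |v y - v xh| / dist y xh) := by
      refine ⟨(K : ℝ), eventually_map.mpr ?_⟩
      have ht' : t ∈ 𝓝[≠] xh := nhdsWithin_le_nhds ht
      filter_upwards [ht', self_mem_nhdsWithin] with y hyt hyne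
      have hd : (0 : ℝ) < dist y xh := dist_pos.mpr hyne
      have := hK.dist_le_mul y hyt xh (mem_of_mem_nhds ht)
      rw [Real.dist_eq] at this
      exact (div_le_iff₀ hd).mpr this
    have hcob : IsCoboundedUnder (· ≤ ·) (𝓝[≠] xh)
        (fun y => max 0 (u y - u xh) / dist y xh) := by
      have hb : IsBoundedUnder (· ≥ ·) (𝓝[≠] xh)
          (fun y => max 0 (u y - u xh) / dist y xh) :=
        ⟨0, eventually_map.mpr (Eventually.of_forall fun y =>
          div_nonneg (le_max_left _ _) dist_nonneg)⟩
      exact hb.isCoboundedUnder_le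
    exact limsup_le_limsup hev hcob hbdd
end

section
/- Let (X,d) be a metric space and u, v, w : X → ℝ be locally Lipschitz functions such that u - v + w achieves a local maximum at x̂ ∈ X. If |∇u|(x̂) = |∇⁺u|(x̂) and |∇v|(x̂) = |∇⁻v|(x̂), then ||∇u|(x̂) − |∇v|(x̂)| ≤ |∇w|(x̂). -/
open Filter Metric Topology

private lemma limsup_bot_real {α : Type*} (g : α → ℝ) :
    Filter.limsup g (⊥ : Filter α) = 0 := by
  have : {a : ℝ | ∀ᶠ y in (⊥ : Filter α), g y ≤ a} = Set.univ := by
    ext a; simp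
  rw [Filter.limsup_eq, this]
  apply Real.sInf_of_not_bddBelow
  rintro ⟨b, hb⟩
  have h1 := hb (Set.mem_univ (b - 1))
  linarith

private lemma bounded_quot {X : Type*} [MetricSpace X] {f : X → ℝ} (hf : LocallyLipschitz f)
    (x : X) : IsBoundedUnder (· ≤ ·) (𝓝[≠] x) (fun y => |f y - f x| / dist y x) := by
  obtain ⟨K, t, ht, hK⟩ := hf x
  have hx : x ∈ t := mem_of_mem_nhds ht
  refine isBoundedUnder_of_eventually_le (a := (K : ℝ)) ?_
  have hmem : ∀ᶠ y in 𝓝[≠] x, y ∈ t ∧ y ≠ x :=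
    (eventually_nhdsWithin_of_eventually_nhds (eventually_of_mem ht fun y hy => hy)).and
      eventually_mem_nhdsWithin
  filter_upwards [hmem] with y hy
  obtain ⟨hyt, hyx⟩ := hy
  have hd : 0 < dist y x := dist_pos.2 hyx
  rw [div_le_iff₀ hd]
  have := hK.dist_le_mul y hyt x hx
  simpa [Real.dist_eq] using this

private lemma key_limsup {X : Type*} [MetricSpace X] {x : X} [(𝓝[≠] x).NeBot]
    {g h k : X → ℝ}
    (hle : ∀ᶠ y in 𝓝[≠] x, g y ≤ h y + k y)
    (hg0 : ∀ᶠ y in 𝓝[≠] x, 0 ≤ g y)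
    (hh0 : ∀ᶠ y in 𝓝[≠] x, 0 ≤ h y) (hk0 : ∀ᶠ y in 𝓝[≠] x, 0 ≤ k y)
    (hhB : IsBoundedUnder (· ≤ ·) (𝓝[≠] x) h) (hkB : IsBoundedUnder (· ≤ ·) (𝓝[≠] x) k) :
    limsup g (𝓝[≠] x) ≤ limsup h (𝓝[≠] x) + limsup k (𝓝[≠] x) := by
  have hgC : IsCoboundedUnder (· ≤ ·) (𝓝[≠] x) g :=
    IsBoundedUnder.isCoboundedUnder_le ⟨0, hg0⟩
  have hkC : IsCoboundedUnder (· ≤ ·) (𝓝[≠] x) k :=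
    IsBoundedUnder.isCoboundedUnder_le ⟨0, hk0⟩
  calc limsup g (𝓝[≠] x) ≤ limsup (h + k) (𝓝[≠] x) :=
        limsup_le_limsup hle hgC (isBoundedUnder_le_add hhB hkB)
    _ ≤ limsup h (𝓝[≠] x) + limsup k (𝓝[≠] x) :=
        limsup_add_le (isBoundedUnder_of_eventually_ge hh0) hhB hkC hkB

theorem stmt_4 {X : Type*} [MetricSpace X] (u v w : X → ℝ)
    (hu : LocallyLipschitz u) (hv : LocallyLipschitz v) (hw : LocallyLipschitz w)
    (xh : X) (hmax : IsLocalMax (fun x => u x - v x + w x) xh)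
    (hu' : slopeAt u xh = upperSlopeAt u xh) (hv' : slopeAt v xh = lowerSlopeAt v xh) :
    |slopeAt u xh - slopeAt v xh| ≤ slopeAt w xh := by
  by_cases hL : 𝓝[≠] xh = ⊥
  · simp only [slopeAt, hL, limsup_bot_real]
    norm_num
  haveI : (𝓝[≠] xh).NeBot := ⟨hL⟩
  have hmax' : ∀ᶠ y in 𝓝[≠] xh, u y - v y + w y ≤ u xh - v xh + w xh :=
    eventually_nhdsWithin_of_eventually_nhds hmax
  have hne : ∀ᶠ y in 𝓝[≠] xh, y ≠ xh := eventually_mem_nhdsWithin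
  have hq0 : ∀ (f : X → ℝ), ∀ᶠ y in 𝓝[≠] xh, 0 ≤ |f y - f xh| / dist y xh := by
    intro f
    filter_upwards [hne] with y hy
    exact div_nonneg (abs_nonneg _) dist_nonneg
  have huB := bounded_quot hu xh
  have hvB := bounded_quot hv xh
  have hwB := bounded_quot hw xh
  -- direction 1 : slopeAt u ≤ slopeAt v + slopeAt w
  have h1 : slopeAt u xh ≤ slopeAt v xh + slopeAt w xh := by
    rw [hu']
    refine key_limsup ?_ ?_ (hq0 v) (hq0 w) hvB hwB
    · filter_upwards [hmax', hne] with y hy hyx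
      have hd : 0 < dist y xh := dist_pos.2 hyx
      rw [← add_div, div_le_div_iff_of_pos_right hd]
      have hv2 : v y - v xh ≤ |v y - v xh| := le_abs_self _
      have hw2 : -|w y - w xh| ≤ w y - w xh := neg_abs_le _
      have hmain : u y - u xh ≤ |v y - v xh| + |w y - w xh| := by linarith
      exact max_le (by positivity) hmain
    · filter_upwards [hne] with y hy
      exact div_nonneg (le_max_left _ _) dist_nonneg
  -- direction 2 : slopeAt v ≤ slopeAt u + slopeAt w
  have h2 : slopeAt v xh ≤ slopeAt u xh + slopeAt w xh := by
    rw [hv']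
    refine key_limsup ?_ ?_ (hq0 u) (hq0 w) huB hwB
    · filter_upwards [hmax', hne] with y hy hyx
      have hd : 0 < dist y xh := dist_pos.2 hyx
      rw [← add_div, div_le_div_iff_of_pos_right hd]
      have h1 : v xh - v y ≤ (u xh - u y) + (w xh - w y) := by linarith
      have : v xh - v y ≤ |u y - u xh| + |w y - w xh| := by
        have hu2 : u xh - u y ≤ |u y - u xh| := by
          rw [abs_sub_comm]; exact le_abs_self _
        have hw2 : w xh - w y ≤ |w y - w xh| := by
          rw [abs_sub_comm]; exact le_abs_self _
        linarith
      exact max_le (by positivity) this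
    · filter_upwards [hne] with y hy
      exact div_nonneg (le_max_left _ _) dist_nonneg
  rw [abs_sub_le_iff]
  constructor <;> linarith
end
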